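/- For every real β > 1 and every positive integer a, the Möbius function satisfies the integral representation μ(a) = a^β ∫_{𝕋^ω} (∑_{n=1}^∞ n^{-β} t^{α(n)})^{-1} · t^{-α(a)} dt. -/

import Mathlib

open MeasureTheory Filter Finset

noncomputable section

instance : MeasurableSpace Circle := borel Circle
instance : BorelSpace Circle := ⟨rfl⟩

/-- The infinite-dimensional torus `𝕋^ω`, a countable product of unit circles. -/
abbrev Torus : Type := ℕ → Circle

/-- `pprime j` is the `j`-th prime (`0`-indexed, so `pprime 0 = 2`). -/
def pprime (j : ℕ) : ℕ := Nat.nth Nat.Prime j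

/-- `expOf n j` is `α_j(n)`, the exponent of the `j`-th prime in the factorization of `n`. -/
def expOf (n j : ℕ) : ℕ := n.factorization (pprime j)

/-- `tpow t n = t^{α(n)} = ∏_j t_j^{α_j(n)}`, a finite product. -/
def tpow (t : Torus) (n : ℕ) : ℂ := ∏ᶠ j, ((t j : ℂ) ^ expOf n j)
lemma pprime_prime (j : ℕ) : (pprime j).Prime := Nat.prime_nth_prime j

lemma le_pprime (j : ℕ) : j ≤ pprime j :=
  (Nat.nth_strictMono Nat.infinite_setOf_prime).le_apply

lemma expOf_eq_zero_of_lt {n j : ℕ} (h : n < j) : expOf n j = 0 :=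
  Nat.factorization_eq_zero_of_lt (h.trans_le (le_pprime j))

lemma mulSupport_finite (f : ℕ → ℂ) (n : ℕ) (hf : ∀ j, expOf n j = 0 → f j = 1)
    (hs : ∀ j, f j ≠ 1 → expOf n j ≠ 0) :
    (Function.mulSupport f).Finite := by
  apply Set.Finite.subset (Set.finite_Iic n)
  intro j hj
  simp only [Function.mem_mulSupport] at hj
  simp only [Set.mem_Iic]
  by_contra h
  exact hs j hj (expOf_eq_zero_of_lt (by omega))

lemma mulSupport_pow_finite (t : Torus) (n : ℕ) :
    (Function.mulSupport fun j => ((t j : ℂ) ^ expOf n j)).Finite := by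
  refine mulSupport_finite _ n (fun j h => by rw [h, pow_zero]) fun j h hc => ?_
  rw [hc, pow_zero] at h; exact h rfl

lemma tpow_eq_prod (t : Torus) (n : ℕ) :
    tpow t n = ∏ j ∈ Finset.range (n + 1), ((t j : ℂ) ^ expOf n j) := by
  refine finprod_eq_prod_of_mulSupport_subset _ ?_
  intro j hj
  simp only [Function.mem_mulSupport] at hj
  simp only [Finset.coe_range, Set.mem_Iio]
  by_contra h
  rw [expOf_eq_zero_of_lt (by omega), pow_zero] at hj
  exact hj rfl

lemma norm_tpow (t : Torus) (n : ℕ) : ‖tpow t n‖ = 1 := by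
  rw [tpow_eq_prod, norm_prod]
  refine Finset.prod_eq_one fun j _ => ?_
  rw [norm_pow, Circle.norm_coe, one_pow]

lemma tpow_ne_zero (t : Torus) (n : ℕ) : tpow t n ≠ 0 :=
  fun h => by simpa [h] using norm_tpow t n

lemma tpow_one (t : Torus) : tpow t 1 = 1 := by
  simp [tpow_eq_prod, expOf]

lemma tpow_mul (t : Torus) {m n : ℕ} (hm : m ≠ 0) (hn : n ≠ 0) :
    tpow t (m * n) = tpow t m * tpow t n := by
  have h : ∀ j, expOf (m * n) j = expOf m j + expOf n j := by
    intro j; simp [expOf, Nat.factorization_mul hm hn]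
  unfold tpow
  rw [← finprod_mul_distrib (mulSupport_pow_finite t m) (mulSupport_pow_finite t n)]
  exact finprod_congr fun j => by rw [h j, pow_add]

lemma continuous_tpow (n : ℕ) : Continuous (fun t : Torus => tpow t n) := by
  simp only [tpow_eq_prod]
  exact continuous_finset_prod _ fun j _ =>
    (continuous_subtype_val.comp (continuous_apply j)).pow _

lemma tpow_translate (t : Torus) (z : Circle) (j n : ℕ) :
    tpow (Function.update (1 : Torus) j z * t) n = (z : ℂ) ^ expOf n j * tpow t n := by
  have key : ∀ i, ((Function.update (1 : Torus) j z * t) i : ℂ) ^ expOf n i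
      = (Function.update (1 : Torus) j z i : ℂ) ^ expOf n i * (t i : ℂ) ^ expOf n i := by
    intro i
    simp [Pi.mul_apply, mul_pow]
  unfold tpow
  rw [finprod_congr key, finprod_mul_distrib ?_ (mulSupport_pow_finite t n)]
  · congr 1
    rw [finprod_eq_single _ j]
    · simp
    · intro i hi
      simp [Function.update_of_ne hi]
  · refine mulSupport_finite _ n (fun i h => by rw [h, pow_zero]) fun i h hc => ?_
    rw [hc, pow_zero] at h; exact h rfl

lemma exists_expOf_ne {n a : ℕ} (hn : n ≠ 0) (ha : a ≠ 0) (hne : n ≠ a) :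
    ∃ j, expOf n j ≠ expOf a j := by
  by_contra h
  push_neg at h
  refine hne (Nat.factorization_inj hn ha ?_)
  ext p
  by_cases hp : p.Prime
  · have := h (Nat.count Nat.Prime p)
    unfold expOf pprime at this
    rwa [Nat.nth_count hp] at this
  · simp [Nat.factorization_eq_zero_of_not_prime _ hp]

lemma integral_tpow (ν : Measure Torus) [ν.IsHaarMeasure] [IsProbabilityMeasure ν]
    (n a : ℕ) (hn : n ≠ 0) (ha : a ≠ 0) :
    ∫ t, tpow t n * (tpow t a)⁻¹ ∂ν = if n = a then 1 else 0 := by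
  rcases eq_or_ne n a with rfl | hne
  · simp only [if_pos rfl]
    have : ∀ t : Torus, tpow t n * (tpow t n)⁻¹ = 1 :=
      fun t => mul_inv_cancel₀ (tpow_ne_zero t n)
    simp [this]
  · simp only [if_neg hne]
    obtain ⟨j, hj⟩ := exists_expOf_ne hn ha hne
    set d : ℤ := (expOf n j : ℤ) - (expOf a j : ℤ) with hd
    have hd0 : d ≠ 0 := by
      simp only [hd, sub_ne_zero]
      exact_mod_cast hj
    set z : Circle := Circle.exp (Real.pi / d) with hz
    have hzd : ((z : ℂ)) ^ d = -1 := by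
      have hd' : (d : ℂ) ≠ 0 := Int.cast_ne_zero.mpr hd0
      rw [hz, Circle.coe_exp, ← Complex.exp_int_mul]
      rw [show (d : ℂ) * (((Real.pi / d : ℝ) : ℂ) * Complex.I) = Real.pi * Complex.I by
        push_cast; field_simp]
      exact Complex.exp_pi_mul_I
    set I : ℂ := ∫ t, tpow t n * (tpow t a)⁻¹ ∂ν with hI
    have key : (z : ℂ) ^ d * I = I := by
      have h0 := integral_mul_left_eq_self (μ := ν)
        (fun t => tpow t n * (tpow t a)⁻¹) (Function.update (1 : Torus) j z)
      have heq : ∀ t : Torus,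
          tpow (Function.update (1 : Torus) j z * t) n
            * (tpow (Function.update (1 : Torus) j z * t) a)⁻¹
          = (z : ℂ) ^ d * (tpow t n * (tpow t a)⁻¹) := by
        intro t
        rw [tpow_translate, tpow_translate, mul_inv]
        have hza : ((z : ℂ) ^ expOf a j)⁻¹ = (z : ℂ) ^ (-(expOf a j : ℤ)) := by
          rw [zpow_neg, zpow_natCast]
        have hzn : (z : ℂ) ^ expOf n j = (z : ℂ) ^ ((expOf n j : ℤ)) := (zpow_natCast _ _).symm
        have hzne : (z : ℂ) ≠ 0 := Circle.coe_ne_zero z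
        rw [show (z : ℂ) ^ expOf n j * tpow t n * (((z:ℂ) ^ expOf a j)⁻¹ * (tpow t a)⁻¹)
            = ((z:ℂ) ^ expOf n j * ((z:ℂ) ^ expOf a j)⁻¹) * (tpow t n * (tpow t a)⁻¹) by ring,
          hza, hzn, ← zpow_add₀ hzne]
        rfl
      calc (z : ℂ) ^ d * I = ∫ t, (z : ℂ) ^ d * (tpow t n * (tpow t a)⁻¹) ∂ν := by
            rw [hI, integral_const_mul]
        _ = ∫ t, tpow (Function.update (1 : Torus) j z * t) n
              * (tpow (Function.update (1 : Torus) j z * t) a)⁻¹ ∂ν := by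
            simp_rw [heq]
        _ = I := h0
    have : (1 - (z : ℂ) ^ d) * I = 0 := by rw [sub_mul, one_mul, key, sub_self]
    rcases mul_eq_zero.mp this with h | h
    · rw [hzd] at h; norm_num at h
    · exact h

open scoped LSeries.notation

lemma integrable_of_continuous (ν : Measure Torus) [IsProbabilityMeasure ν]
    {f : Torus → ℂ} (hf : Continuous f) : Integrable f ν :=
  hf.integrable_of_hasCompactSupport ((isClosed_tsupport f).isCompact)

lemma conv_eq (t : Torus) :
    (fun n => ((ArithmeticFunction.moebius n : ℤ) : ℂ) * tpow t n) ⍟ (fun n => tpow t n)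
      = fun n => if n = 1 then 1 else 0 := by
  funext n
  simp only [LSeries.convolution_def]
  rcases eq_or_ne n 0 with rfl | hn
  · simp
  · have h1 : ∀ p ∈ n.divisorsAntidiagonal,
        ((ArithmeticFunction.moebius p.1 : ℤ) : ℂ) * tpow t p.1 * tpow t p.2
          = ((ArithmeticFunction.moebius p.1 : ℤ) : ℂ) * tpow t n := by
      intro p hp
      obtain ⟨hpe, -⟩ := Nat.mem_divisorsAntidiagonal.mp hp
      have hp1 : p.1 ≠ 0 := by rintro h; rw [h] at hpe; simp at hpe; omega
      have hp2 : p.2 ≠ 0 := by rintro h; rw [h] at hpe; simp at hpe; omega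
      rw [mul_assoc, ← tpow_mul t hp1 hp2, hpe]
    rw [Finset.sum_congr rfl h1, ← Finset.sum_mul]
    have h2 : ∑ p ∈ n.divisorsAntidiagonal, ((ArithmeticFunction.moebius p.1 : ℤ) : ℂ)
        = if n = 1 then 1 else 0 := by
      have := congrArg (fun f => f n) (ArithmeticFunction.coe_moebius_mul_coe_zeta (R := ℂ))
      simp only [ArithmeticFunction.mul_apply, ArithmeticFunction.one_apply] at this
      rw [← this]
      refine Finset.sum_congr rfl fun p hp => ?_
      obtain ⟨hpe, hn0⟩ := Nat.mem_divisorsAntidiagonal.mp hp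
      have hp2 : p.2 ≠ 0 := by rintro h; rw [h] at hpe; simp at hpe; omega
      simp [ArithmeticFunction.intCoe_apply, ArithmeticFunction.natCoe_apply,
        ArithmeticFunction.zeta_apply, hp2]
    rw [h2]
    rcases eq_or_ne n 1 with rfl | h
    · simp [tpow_one]
    · simp [h]

lemma summable_mu (t : Torus) {β : ℝ} (hβ : 1 < β) :
    LSeriesSummable (fun n => ((ArithmeticFunction.moebius n : ℤ) : ℂ) * tpow t n) (β : ℂ) := by
  refine LSeriesSummable_of_bounded_of_one_lt_re (m := 1) (fun n _ => ?_) (by simp [hβ])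
  rw [norm_mul, norm_tpow, mul_one]
  rw [Complex.norm_intCast]
  exact_mod_cast ArithmeticFunction.abs_moebius_le_one

lemma summable_one (t : Torus) {β : ℝ} (hβ : 1 < β) :
    LSeriesSummable (fun n => tpow t n) (β : ℂ) := by
  refine LSeriesSummable_of_bounded_of_one_lt_re (m := 1) (fun n _ => ?_) (by simp [hβ])
  rw [norm_tpow]

lemma lseries_prod_one (t : Torus) {β : ℝ} (hβ : 1 < β) :
    LSeries (fun n => ((ArithmeticFunction.moebius n : ℤ) : ℂ) * tpow t n) (β : ℂ)
      * LSeries (fun n => tpow t n) (β : ℂ) = 1 := by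
  rw [← LSeries_convolution' (summable_mu t hβ) (summable_one t hβ), conv_eq]
  unfold LSeries
  rw [tsum_eq_single 1]
  · rw [LSeries.term_of_ne_zero one_ne_zero]
    simp
  · intro n hn
    rcases eq_or_ne n 0 with rfl | h0
    · exact LSeries.term_zero _ _
    · rw [LSeries.term_of_ne_zero h0]
      simp [hn]

lemma statement_sum_eq (t : Torus) {β : ℝ} (hβ : 1 < β) :
    (∑' n : ℕ, tpow t (n + 1) / (Complex.ofReal (((n : ℝ) + 1) ^ β)))
      = LSeries (fun n => tpow t n) (β : ℂ) := by
  rw [LSeries, Summable.tsum_eq_zero_add (summable_one t hβ), LSeries.term_zero, zero_add]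
  refine tsum_congr fun n => ?_
  rw [LSeries.term_of_ne_zero (Nat.succ_ne_zero n)]
  congr 1
  rw [Complex.ofReal_cpow (by positivity : (0:ℝ) ≤ (n:ℝ)+1)]
  push_cast
  ring_nf

lemma norm_term_le (t : Torus) {β : ℝ} (hβ : 1 < β) (n : ℕ) :
    ‖LSeries.term (fun m => ((ArithmeticFunction.moebius m : ℤ) : ℂ) * tpow t m) (β : ℂ) n‖
      ≤ 1 / (n : ℝ) ^ β := by
  rcases eq_or_ne n 0 with rfl | h0
  · simp [LSeries.term_zero, Real.zero_rpow (by linarith : β ≠ 0)]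
  · rw [LSeries.term_of_ne_zero h0, norm_div, norm_mul, norm_tpow, mul_one]
    rw [Complex.norm_natCast_cpow_of_pos (Nat.pos_of_ne_zero h0), Complex.ofReal_re]
    gcongr
    rw [Complex.norm_intCast]
    exact_mod_cast ArithmeticFunction.abs_moebius_le_one


/-- For every real `β > 1` and every positive integer `a`, the Möbius function satisfies
`μ(a) = a^β ∫_{𝕋^ω} (∑_{n=1}^∞ n^{-β} t^{α(n)})⁻¹ · t^{-α(a)} dt`, where `dt` is the
normalized Haar measure on `𝕋^ω` and `t^{-α(a)} = (t^{α(a)})⁻¹`. -/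
theorem moebius_integral_repr (β : ℝ) (hβ : 1 < β) (a : ℕ) (ha : 1 ≤ a)
    (ν : Measure Torus) [ν.IsHaarMeasure] [IsProbabilityMeasure ν] :
    ((ArithmeticFunction.moebius a : ℤ) : ℂ) =
      Complex.ofReal ((a : ℝ) ^ β) *
        ∫ t : Torus,
          (∑' n : ℕ, tpow t (n + 1) / (Complex.ofReal (((n : ℝ) + 1) ^ β)))⁻¹
            * (tpow t a)⁻¹ ∂ν := by
  have ha0 : a ≠ 0 := by omega
  set F : ℕ → Torus → ℂ := fun n t =>
    LSeries.term (fun m => ((ArithmeticFunction.moebius m : ℤ) : ℂ) * tpow t m) (β : ℂ) n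
      * (tpow t a)⁻¹ with hF
  -- pointwise identity for the integrand
  have hpt : ∀ t : Torus,
      (∑' n : ℕ, tpow t (n + 1) / (Complex.ofReal (((n : ℝ) + 1) ^ β)))⁻¹ * (tpow t a)⁻¹
        = ∑' n : ℕ, F n t := by
    intro t
    rw [statement_sum_eq t hβ,
      (eq_inv_of_mul_eq_one_left (lseries_prod_one t hβ)).symm, LSeries, tsum_mul_right]
  -- continuity and norm bounds
  have hFcont : ∀ n, Continuous (fun t => F n t) := by
    intro n
    rcases eq_or_ne n 0 with rfl | h0
    · simp only [hF, LSeries.term_zero, zero_mul]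
      exact continuous_const
    · have : (fun t => F n t) = fun t =>
          (((ArithmeticFunction.moebius n : ℤ) : ℂ) / (n : ℂ) ^ (β : ℂ))
            * (tpow t n * (tpow t a)⁻¹) := by
        funext t
        simp only [hF, LSeries.term_of_ne_zero h0]
        ring
      rw [this]
      exact continuous_const.mul ((continuous_tpow n).mul
        ((continuous_tpow a).inv₀ fun t => tpow_ne_zero t a))
  have hFint : ∀ n, Integrable (F n) ν := fun n => integrable_of_continuous ν (hFcont n)
  have hFnorm : ∀ n, ∀ t, ‖F n t‖ ≤ 1 / (n : ℝ) ^ β := by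
    intro n t
    rw [hF]
    simp only [norm_mul, norm_inv, norm_tpow, inv_one, mul_one]
    exact norm_term_le t hβ n
  -- swap integral and sum
  have hswap : ∫ t, (∑' n, F n t) ∂ν = ∑' n, ∫ t, F n t ∂ν := by
    refine (integral_tsum_of_summable_integral_norm hFint ?_).symm
    refine Summable.of_nonneg_of_le (fun n => by positivity)
      (fun n => ?_) (Real.summable_one_div_nat_rpow.mpr hβ)
    calc ∫ t, ‖F n t‖ ∂ν ≤ ∫ _t, 1 / (n : ℝ) ^ β ∂ν :=
          integral_mono (hFint n).norm (integrable_const _) (hFnorm n)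
      _ = 1 / (n : ℝ) ^ β := by simp
  -- compute each integral
  have hval : ∀ n, ∫ t, F n t ∂ν =
      if n = a then ((ArithmeticFunction.moebius a : ℤ) : ℂ) / (a : ℂ) ^ (β : ℂ) else 0 := by
    intro n
    rcases eq_or_ne n 0 with rfl | h0
    · simp only [hF, LSeries.term_zero, zero_mul, integral_zero]
      rw [if_neg (by omega)]
    · have heqF : ∀ t : Torus, F n t =
          (((ArithmeticFunction.moebius n : ℤ) : ℂ) / (n : ℂ) ^ (β : ℂ))
            * (tpow t n * (tpow t a)⁻¹) := by
        intro t
        simp only [hF, LSeries.term_of_ne_zero h0]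
        ring
      simp_rw [heqF]
      rw [integral_const_mul, integral_tpow ν n a h0 ha0]
      rcases eq_or_ne n a with rfl | hna
      · simp
      · simp [hna]
  rw [integral_congr_ae (Filter.Eventually.of_forall hpt), hswap]
  rw [tsum_congr hval, tsum_eq_single a (fun n hn => by rw [if_neg hn]), if_pos rfl]
  rw [Complex.ofReal_cpow (Nat.cast_nonneg a), Complex.ofReal_natCast]
  rw [mul_div_cancel₀]
  simp only [ne_eq, Complex.cpow_eq_zero_iff, not_and_or, not_not]
  left
  exact_mod_cast ha0
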